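/- arXiv:2605.02879 — 5 statements merged into one kernel-verified Lean document; each statement's English description precedes it below -/
import Mathlib

section
/- Let ℓ, φ₀, φ₁ be positive real numbers with φ₀ ≥ φ₁, and set α := (1/ℓ)·arcosh(φ₀/φ₁) and β := (1/ℓ)·log(φ₀/φ₁). Define φ : ℝ → ℝ by φ(x) := φ₁·cosh(α·(ℓ − x)). Then: (i) φ is non-increasing on [0, ℓ]; (ii) φ(0) = φ₀, φ(ℓ) = φ₁ and φ′(ℓ) = 0; (iii) φ″(x) = α²·φ(x) for every x; and (iv) 0 < φ(x) ≤ φ₀·exp(−β·x) for all x ∈ [0, ℓ]. -/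
open Real Set

/-- Inverse hyperbolic cosine on `[1, ∞)`: `arcosh y = log (y + √(y² − 1))`. -/
noncomputable def arcosh (y : ℝ) : ℝ := Real.log (y + Real.sqrt (y ^ 2 - 1))

lemma arcosh_nonneg {y : ℝ} (hy : 1 ≤ y) : 0 ≤ _root_.arcosh y :=
  Real.log_nonneg (by nlinarith [Real.sqrt_nonneg (y ^ 2 - 1)])

lemma cosh_arcosh {y : ℝ} (hy : 1 ≤ y) : Real.cosh (_root_.arcosh y) = y := by
  have h1 : (0:ℝ) ≤ y ^ 2 - 1 := by nlinarith
  have hs : Real.sqrt (y ^ 2 - 1) ^ 2 = y ^ 2 - 1 := Real.sq_sqrt h1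
  have hsn : 0 ≤ Real.sqrt (y ^ 2 - 1) := Real.sqrt_nonneg _
  set z := y + Real.sqrt (y ^ 2 - 1) with hz
  have hz0 : 0 < z := by nlinarith
  have hinv : z⁻¹ = y - Real.sqrt (y ^ 2 - 1) :=
    inv_eq_of_mul_eq_one_right (by rw [hz]; nlinarith)
  rw [_root_.arcosh, ← hz, Real.cosh_eq, Real.exp_neg, Real.exp_log hz0, hinv, hz]
  ring

lemma logcosh_hasDeriv (α : ℝ) (s : ℝ) :
    HasDerivAt (fun s => Real.log (Real.cosh (α * s)))
      (α * Real.sinh (α * s) / Real.cosh (α * s)) s := by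
  have h1 : HasDerivAt (fun s : ℝ => α * s) α s := by
    simpa using (hasDerivAt_id s).const_mul α
  have h2 := (h1.cosh).log ((Real.cosh_pos _).ne')
  convert h2 using 1
  ring

lemma logcosh_deriv (α : ℝ) :
    deriv (fun s => Real.log (Real.cosh (α * s)))
      = fun s => α * Real.sinh (α * s) / Real.cosh (α * s) :=
  funext fun s => (logcosh_hasDeriv α s).deriv

lemma logcosh_deriv2 (α : ℝ) (s : ℝ) :
    HasDerivAt (fun s => α * Real.sinh (α * s) / Real.cosh (α * s))
      (α ^ 2 / Real.cosh (α * s) ^ 2) s := by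
  have h1 : HasDerivAt (fun s : ℝ => α * s) α s := by
    simpa using (hasDerivAt_id s).const_mul α
  have hnum : HasDerivAt (fun s : ℝ => α * Real.sinh (α * s))
      (α * (Real.cosh (α * s) * α)) s := (h1.sinh).const_mul α
  have hden := h1.cosh
  have h := hnum.div hden ((Real.cosh_pos _).ne')
  refine h.congr_deriv ?_
  have := Real.cosh_sq_sub_sinh_sq (α * s)
  rw [div_left_inj' (pow_pos (Real.cosh_pos _) 2).ne']
  linear_combination (α ^ 2) * this

lemma logcosh_convex (α : ℝ) :
    ConvexOn ℝ Set.univ (fun s => Real.log (Real.cosh (α * s))) := by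
  apply convexOn_univ_of_deriv2_nonneg
  · exact fun s => (logcosh_hasDeriv α s).differentiableAt
  · rw [logcosh_deriv]
    exact fun s => (logcosh_deriv2 α s).differentiableAt
  · intro s
    have : deriv^[2] (fun s => Real.log (Real.cosh (α * s))) s
        = α ^ 2 / Real.cosh (α * s) ^ 2 := by
      simp only [Function.iterate_succ, Function.iterate_zero, Function.comp_apply,
        Function.id_def, id_eq]
      rw [logcosh_deriv]
      exact (logcosh_deriv2 α s).deriv
    rw [this]
    positivity

/-- Construction of the comparison function on a bounded edge
(Lemma `lem:exp-bound` of the paper). -/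
theorem stmt_0 (ℓ φ₀ φ₁ : ℝ) (hℓ : 0 < ℓ) (hφ₀ : 0 < φ₀) (hφ₁ : 0 < φ₁)
    (h01 : φ₁ ≤ φ₀)
    (α β : ℝ) (hα : α = (1 / ℓ) * _root_.arcosh (φ₀ / φ₁))
    (hβ : β = (1 / ℓ) * Real.log (φ₀ / φ₁))
    (φ : ℝ → ℝ) (hφ : φ = fun x => φ₁ * Real.cosh (α * (ℓ - x))) :
    AntitoneOn φ (Set.Icc 0 ℓ) ∧
    φ 0 = φ₀ ∧ φ ℓ = φ₁ ∧ deriv φ ℓ = 0 ∧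
    (∀ x, deriv (deriv φ) x = α ^ 2 * φ x) ∧
    (∀ x ∈ Set.Icc 0 ℓ, 0 < φ x ∧ φ x ≤ φ₀ * Real.exp (-β * x)) := by
  have ht1 : 1 ≤ φ₀ / φ₁ := (one_le_div hφ₁).2 h01
  have hαℓ : α * ℓ = _root_.arcosh (φ₀ / φ₁) := by
    rw [hα]; field_simp
  have hβℓ : β * ℓ = Real.log (φ₀ / φ₁) := by
    rw [hβ]; field_simp
  have hαnn : 0 ≤ α := by
    rw [hα]
    exact mul_nonneg (by positivity) (_root_.arcosh_nonneg ht1)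
  have hcosh : Real.cosh (α * ℓ) = φ₀ / φ₁ := by rw [hαℓ, _root_.cosh_arcosh ht1]
  -- first derivative
  have hd1 : ∀ x, HasDerivAt φ (-(φ₁ * α) * Real.sinh (α * (ℓ - x))) x := by
    intro x
    rw [hφ]
    have h1 : HasDerivAt (fun x : ℝ => α * (ℓ - x)) (-α) x := by
      simpa using ((hasDerivAt_id x).const_sub ℓ).const_mul α
    have := (h1.cosh).const_mul φ₁
    exact this.congr_deriv (by ring)
  have hD : deriv φ = fun x => -(φ₁ * α) * Real.sinh (α * (ℓ - x)) :=
    funext fun x => (hd1 x).deriv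
  have hd2 : ∀ x, HasDerivAt (deriv φ) (α ^ 2 * φ x) x := by
    intro x
    rw [hD]
    have h1 : HasDerivAt (fun x : ℝ => α * (ℓ - x)) (-α) x := by
      simpa using ((hasDerivAt_id x).const_sub ℓ).const_mul α
    have := (h1.sinh).const_mul (-(φ₁ * α))
    refine this.congr_deriv ?_
    rw [hφ]; ring
  refine ⟨?_, ?_, ?_, ?_, fun x => (hd2 x).deriv, ?_⟩
  · -- antitone
    intro a ha b hb hab
    rw [hφ]
    simp only
    refine mul_le_mul_of_nonneg_left (Real.cosh_le_cosh.2 ?_) hφ₁.le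
    rw [abs_of_nonneg (mul_nonneg hαnn (by linarith [hb.2])),
      abs_of_nonneg (mul_nonneg hαnn (by linarith [ha.2]))]
    exact mul_le_mul_of_nonneg_left (by linarith) hαnn
  · rw [hφ]; simp only [sub_zero, hcosh]; field_simp
  · rw [hφ]; simp
  · rw [hD]; simp
  · -- exponential bound
    intro x hx
    have hpos : 0 < φ x := by rw [hφ]; exact mul_pos hφ₁ (Real.cosh_pos _)
    refine ⟨hpos, ?_⟩
    set s := ℓ - x with hs
    have hs0 : 0 ≤ s := by simp [hs]; linarith [hx.2]
    have hsl : s ≤ ℓ := by simp [hs]; linarith [hx.1]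
    -- convexity bound : log (cosh (α s)) ≤ β * s
    have hkey : Real.log (Real.cosh (α * s)) ≤ β * s := by
      have hc := (logcosh_convex α).2 (mem_univ (0:ℝ)) (mem_univ ℓ)
        (show (0:ℝ) ≤ 1 - s / ℓ by
          rw [sub_nonneg]; exact div_le_one_of_le₀ hsl hℓ.le)
        (show (0:ℝ) ≤ s / ℓ by positivity)
        (show 1 - s / ℓ + s / ℓ = 1 by ring)
      have he : (1 - s / ℓ) • (0:ℝ) + (s / ℓ) • ℓ = s := by
        field_simp
        rw [smul_zero, zero_add, smul_eq_mul, div_mul_cancel₀ s hℓ.ne']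
      rw [he] at hc
      calc Real.log (Real.cosh (α * s)) ≤
          (1 - s / ℓ) * Real.log (Real.cosh (α * 0)) +
            (s / ℓ) * Real.log (Real.cosh (α * ℓ)) := hc
        _ = β * s := by
            rw [mul_zero, Real.cosh_zero, Real.log_one, hcosh, ← hβℓ]
            field_simp
            try ring
    have hexp : Real.cosh (α * s) ≤ Real.exp (β * s) := by
      calc Real.cosh (α * s) = Real.exp (Real.log (Real.cosh (α * s))) :=
            (Real.exp_log (Real.cosh_pos _)).symm
        _ ≤ Real.exp (β * s) := Real.exp_le_exp.2 hkey
    rw [hφ]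
    simp only [← hs]
    calc φ₁ * Real.cosh (α * s) ≤ φ₁ * Real.exp (β * s) :=
          mul_le_mul_of_nonneg_left hexp hφ₁.le
      _ = φ₀ * Real.exp (-β * x) := by
          rw [hs, show β * (ℓ - x) = β * ℓ + -β * x by ring, Real.exp_add, hβℓ,
            Real.exp_log (by positivity)]
          field_simp
          try ring
end

section
/- Let p > 2, λ ∈ ℝ and L > 0. Suppose v : ℝ → ℝ is twice continuously differentiable on [0, L], satisfies −v″(x) + λ·v(x) = |v(x)|^{p−2}·v(x) for every x ∈ [0, L], v(0) = v(L) = 0, and v(x) > 0 for all x ∈ (0, L). Then v is symmetric about the midpoint: v(x) = v(L − x) for every x ∈ [0, L]; in particular v′(0) = −v′(L). -/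
open Set

lemma g_hasDerivAt {p : ℝ} (hp : 2 < p) (u : ℝ) :
    HasDerivAt (fun u : ℝ => |u| ^ (p - 2) * u) ((p - 1) * |u| ^ (p - 2)) u := by
  rcases lt_trichotomy u 0 with hu | hu | hu
  · -- u < 0 : near u, function equals  -(-x)^(p-1)
    have h1 : HasDerivAt (fun x : ℝ => -((-x) ^ (p - 1))) ((p - 1) * (-u) ^ (p - 2)) u := by
      have h0 : HasDerivAt (fun x : ℝ => (-x : ℝ)) (-1) u := (hasDerivAt_neg u)
      have h2 : HasDerivAt (fun y : ℝ => y ^ (p - 1)) ((p - 1) * (-u) ^ (p - 1 - 1)) (-u) :=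
        Real.hasDerivAt_rpow_const (Or.inl (by linarith))
      have := (h2.comp u h0).neg
      refine this.congr_deriv ?_
      ring_nf
    have heq : (fun x : ℝ => |x| ^ (p - 2) * x) =ᶠ[nhds u] fun x : ℝ => -((-x) ^ (p - 1)) := by
      filter_upwards [Iio_mem_nhds hu] with x hx
      have hx' : (0:ℝ) < -x := by simpa using hx
      rw [abs_of_neg (by simpa using hx)]
      rw [show p - 1 = (p - 2) + 1 by ring, Real.rpow_add hx', Real.rpow_one]
      ring
    have := h1.congr_of_eventuallyEq heq
    rw [abs_of_neg hu]; exact this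
  · -- u = 0
    subst hu
    have hp2 : (0:ℝ) < p - 2 := by linarith
    rw [hasDerivAt_iff_isLittleO]
    simp only [abs_zero, Real.zero_rpow (ne_of_gt hp2), mul_zero, sub_zero, zero_mul,
      smul_eq_mul, mul_zero]
    have htend : Filter.Tendsto (fun x : ℝ => |x| ^ (p - 2)) (nhds 0) (nhds 0) := by
      have h1 : ContinuousAt (fun y : ℝ => y ^ (p - 2)) 0 :=
        Real.continuousAt_rpow_const 0 (p - 2) (Or.inr hp2.le)
      have : Filter.Tendsto (fun x : ℝ => |x|) (nhds (0:ℝ)) (nhds (0:ℝ)) := by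
        simpa only [abs_zero] using continuous_abs.tendsto (0:ℝ)
      have := h1.tendsto.comp this
      simpa [Function.comp_def, Real.zero_rpow (ne_of_gt hp2)] using this
    have h1 : (fun x : ℝ => |x| ^ (p - 2)) =o[nhds 0] (fun _ : ℝ => (1:ℝ)) :=
      (Asymptotics.isLittleO_one_iff ℝ).2 htend
    have h2 := h1.mul_isBigO (Asymptotics.isBigO_refl (fun x : ℝ => x) (nhds 0))
    simpa using h2
  · -- u > 0
    have h1 : HasDerivAt (fun x : ℝ => x ^ (p - 1)) ((p - 1) * u ^ (p - 2)) u := by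
      have := Real.hasDerivAt_rpow_const (x := u) (p := p - 1) (Or.inl (ne_of_gt hu))
      convert this using 2
      ring
    have heq : (fun x : ℝ => |x| ^ (p - 2) * x) =ᶠ[nhds u] fun x : ℝ => x ^ (p - 1) := by
      filter_upwards [Ioi_mem_nhds hu] with x hx
      have hx' : (0:ℝ) < x := hx
      rw [abs_of_pos hx', show p - 1 = (p - 2) + 1 by ring, Real.rpow_add hx', Real.rpow_one]
    have := h1.congr_of_eventuallyEq heq
    rw [abs_of_pos hu]; exact this

lemma g_lip {p R : ℝ} (hp : 2 < p) (hR : 0 ≤ R)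
    {a b : ℝ} (ha : |a| ≤ R) (hb : |b| ≤ R) :
    |(|a| ^ (p - 2) * a) - (|b| ^ (p - 2) * b)| ≤ ((p - 1) * R ^ (p - 2)) * |a - b| := by
  have := Convex.norm_image_sub_le_of_norm_hasDerivWithin_le
    (f := fun u : ℝ => |u| ^ (p - 2) * u) (f' := fun u : ℝ => (p - 1) * |u| ^ (p - 2))
    (s := Icc (-R) R) (C := (p - 1) * R ^ (p - 2))
    (fun x _ => (g_hasDerivAt hp x).hasDerivWithinAt)
    (fun x hx => by
      rw [Real.norm_eq_abs, abs_of_nonneg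
        (mul_nonneg (by linarith) (Real.rpow_nonneg (abs_nonneg x) _))]
      have h1 : |x| ^ (p - 2) ≤ R ^ (p - 2) :=
        Real.rpow_le_rpow (abs_nonneg x) (abs_le.2 hx) (by linarith)
      exact mul_le_mul_of_nonneg_left h1 (by linarith))
    (convex_Icc _ _) (abs_le.1 hb) (abs_le.1 ha)
  simpa [Real.norm_eq_abs] using this

/-- A positive Dirichlet solution of the NLS ODE `−v″ + λv = |v|^{p−2}v`
on `[0, L]` is symmetric about the midpoint; in particular `v′(0) = −v′(L)`. -/
theorem stmt_6 (p lam L : ℝ) (hp : 2 < p) (hL : 0 < L)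
    (v v' v'' : ℝ → ℝ)
    (hv : ∀ x ∈ Set.Icc 0 L, HasDerivWithinAt v (v' x) (Set.Icc 0 L) x)
    (hv' : ∀ x ∈ Set.Icc 0 L, HasDerivWithinAt v' (v'' x) (Set.Icc 0 L) x)
    (hv'' : ContinuousOn v'' (Set.Icc 0 L))
    (heq : ∀ x ∈ Set.Icc 0 L, -v'' x + lam * v x = |v x| ^ (p - 2) * v x)
    (h0 : v 0 = 0) (hLval : v L = 0)
    (hpos : ∀ x ∈ Set.Ioo 0 L, 0 < v x) :
    (∀ x ∈ Set.Icc 0 L, v x = v (L - x)) ∧ v' 0 = -v' L := by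
  have hvc : ContinuousOn v (Icc 0 L) := fun x hx => (hv x hx).continuousWithinAt
  have hv'c : ContinuousOn v' (Icc 0 L) := fun x hx => (hv' x hx).continuousWithinAt
  obtain ⟨R0, hR0⟩ := isCompact_Icc.exists_bound_of_continuousOn hvc
  set R : ℝ := max R0 0 with hRdef
  have hR : 0 ≤ R := le_max_right _ _
  have hvR : ∀ x ∈ Icc 0 L, |v x| ≤ R := fun x hx =>
    le_trans (by simpa [Real.norm_eq_abs] using hR0 x hx) (le_max_left _ _)
  set G : ℝ → ℝ := fun u => |u| ^ (p - 2) * u with hGdef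
  set Kg : ℝ := (p - 1) * R ^ (p - 2) with hKgdef
  have hKg : 0 ≤ Kg := mul_nonneg (by linarith) (Real.rpow_nonneg hR _)
  set K : NNReal := Real.toNNReal (1 + |lam| + Kg) with hKdef
  have hKcoe : (K : ℝ) = 1 + |lam| + Kg := Real.coe_toNNReal _ (by positivity)
  set F : ℝ → ℝ × ℝ → ℝ × ℝ := fun _ z => (z.2, lam * z.1 - G z.1) with hFdef
  set S : ℝ → Set (ℝ × ℝ) := fun _ => {z : ℝ × ℝ | |z.1| ≤ R} with hSdef
  have hFlip : ∀ t, LipschitzOnWith K (F t) (S t) := by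
    intro t
    rw [lipschitzOnWith_iff_dist_le_mul]
    intro z hz w hw
    have hd1 : dist z.1 w.1 ≤ dist z w := by rw [Prod.dist_eq]; exact le_max_left _ _
    have hd2 : dist z.2 w.2 ≤ dist z w := by rw [Prod.dist_eq]; exact le_max_right _ _
    have hdnn : 0 ≤ dist z w := dist_nonneg
    rw [Prod.dist_eq]
    apply max_le
    · calc dist (F t z).1 (F t w).1 = dist z.2 w.2 := rfl
        _ ≤ dist z w := hd2
        _ ≤ (K : ℝ) * dist z w := by nlinarith [hKcoe, abs_nonneg lam]
    · have hglip := g_lip hp hR (a := z.1) (b := w.1) hz hw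
      have : dist (F t z).2 (F t w).2
          ≤ |lam| * dist z.1 w.1 + Kg * dist z.1 w.1 := by
        simp only [hFdef, Real.dist_eq] at *
        calc |(lam * z.1 - G z.1) - (lam * w.1 - G w.1)|
            = |lam * (z.1 - w.1) - (G z.1 - G w.1)| := by ring_nf
          _ ≤ |lam * (z.1 - w.1)| + |G z.1 - G w.1| := abs_sub _ _
          _ ≤ |lam| * |z.1 - w.1| + Kg * |z.1 - w.1| := by
              rw [abs_mul]; exact add_le_add le_rfl hglip
      calc dist (F t z).2 (F t w).2 ≤ |lam| * dist z.1 w.1 + Kg * dist z.1 w.1 := this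
        _ ≤ |lam| * dist z w + Kg * dist z w := by
            have := abs_nonneg lam
            nlinarith
        _ ≤ (K : ℝ) * dist z w := by nlinarith [hKcoe]
  -- maximum point
  obtain ⟨c, hcmem, hcmax⟩ :=
    isCompact_Icc.exists_isMaxOn ⟨0, left_mem_Icc.2 hL.le⟩ hvc
  have hvcpos : 0 < v c :=
    lt_of_lt_of_le (hpos (L / 2) ⟨by linarith, by linarith⟩)
      (hcmax ⟨by linarith, by linarith⟩)
  have hcIoo : c ∈ Ioo 0 L := by
    refine ⟨?_, ?_⟩
    · rcases eq_or_lt_of_le hcmem.1 with h | h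
      · exact absurd hvcpos (by rw [← h, h0]; exact lt_irrefl 0)
      · exact h
    · rcases eq_or_lt_of_le hcmem.2 with h | h
      · exact absurd hvcpos (by rw [h, hLval]; exact lt_irrefl 0)
      · exact h
  have hDv : ∀ x ∈ Ioo 0 L, HasDerivAt v (v' x) x := fun x hx =>
    (hv x (Ioo_subset_Icc_self hx)).hasDerivAt (Icc_mem_nhds hx.1 hx.2)
  have hDv' : ∀ x ∈ Ioo 0 L, HasDerivAt v' (v'' x) x := fun x hx =>
    (hv' x (Ioo_subset_Icc_self hx)).hasDerivAt (Icc_mem_nhds hx.1 hx.2)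
  have hv'c0 : v' c = 0 :=
    (hcmax.isLocalMax (Icc_mem_nhds hcIoo.1 hcIoo.2)).hasDerivAt_eq_zero (hDv c hcIoo)
  have hvv : ∀ x ∈ Icc 0 L, v'' x = lam * v x - G (v x) := by
    intro x hx
    have := heq x hx
    simp only [hGdef]
    linarith
  set a : ℝ := max 0 (2 * c - L) with hadef
  set b : ℝ := min L (2 * c) with hbdef
  have hab : a + b = 2 * c := by
    rcases le_total (2 * c) L with h | h
    · rw [hadef, hbdef, max_eq_left (by linarith), min_eq_right h]; ring
    · rw [hadef, hbdef, max_eq_right (by linarith), min_eq_left h]; ring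
  have ha0 : 0 ≤ a := le_max_left _ _
  have hbL : b ≤ L := min_le_left _ _
  have hacb : c ∈ Ioo a b :=
    ⟨max_lt hcIoo.1 (by linarith [hcIoo.2]), lt_min hcIoo.2 (by linarith [hcIoo.1])⟩
  have hsub : Icc a b ⊆ Icc 0 L := Icc_subset_Icc ha0 hbL
  have hsubo : Ioo a b ⊆ Ioo 0 L := Ioo_subset_Ioo ha0 hbL
  have hreflI : ∀ x ∈ Icc a b, 2 * c - x ∈ Icc a b := fun x hx =>
    ⟨by linarith [hx.2], by linarith [hx.1]⟩
  have hreflO : ∀ x ∈ Ioo a b, 2 * c - x ∈ Ioo a b := fun x hx =>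
    ⟨by linarith [hx.2], by linarith [hx.1]⟩
  set f₁ : ℝ → ℝ × ℝ := fun x => (v x, v' x) with hf₁def
  set f₂ : ℝ → ℝ × ℝ := fun x => (v (2 * c - x), -v' (2 * c - x)) with hf₂def
  have hσc : ContinuousOn (fun x : ℝ => 2 * c - x) (Icc a b) :=
    (continuous_const.sub continuous_id).continuousOn
  have h1c : ContinuousOn f₁ (Icc a b) := ((hvc.mono hsub).prodMk (hv'c.mono hsub))
  have h2c : ContinuousOn f₂ (Icc a b) := by
    apply ContinuousOn.prodMk
    · exact (hvc.mono hsub).comp hσc (fun x hx => hreflI x hx)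
    · exact ((hv'c.mono hsub).comp hσc (fun x hx => hreflI x hx)).neg
  have h1d : ∀ x ∈ Ioo a b, HasDerivAt f₁ (F x (f₁ x)) x := by
    intro x hx
    have hx' := hsubo hx
    have h := (hDv x hx').prodMk (hDv' x hx')
    have hval : F x (f₁ x) = (v' x, v'' x) := by
      simp only [hFdef, hf₁def]
      exact Prod.ext rfl (hvv x (Ioo_subset_Icc_self hx')).symm
    rw [hval]; exact h
  have h2d : ∀ x ∈ Ioo a b, HasDerivAt f₂ (F x (f₂ x)) x := by
    intro x hx
    have hx2 : 2 * c - x ∈ Ioo 0 L := hsubo (hreflO x hx)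
    have hneg : HasDerivAt (fun y : ℝ => 2 * c - y) (-1) x := by
      simpa using (hasDerivAt_id x).const_sub (2 * c)
    have hA : HasDerivAt (fun y : ℝ => v (2 * c - y)) (v' (2 * c - x) * (-1)) x := by
      have := (hDv _ hx2).comp x hneg
      simpa [Function.comp_def] using this
    have hB : HasDerivAt (fun y : ℝ => -v' (2 * c - y)) (-(v'' (2 * c - x) * (-1))) x := by
      have := ((hDv' _ hx2).comp x hneg).neg
      simpa [Function.comp_def, Pi.neg_def] using this
    have h := hA.prodMk hB
    have hval : F x (f₂ x) = (v' (2 * c - x) * (-1), -(v'' (2 * c - x) * (-1))) := by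
      simp only [hFdef, hf₂def]
      refine Prod.ext (by ring) ?_
      show lam * v (2 * c - x) - G (v (2 * c - x)) = _
      rw [hvv _ (Ioo_subset_Icc_self hx2)]; ring
    rw [hval]; exact h
  have h1s : ∀ x ∈ Ioo a b, f₁ x ∈ S x := fun x hx =>
    hvR x (hsub (Ioo_subset_Icc_self hx))
  have h2s : ∀ x ∈ Ioo a b, f₂ x ∈ S x := fun x hx =>
    hvR _ (hsub (Ioo_subset_Icc_self (hreflO x hx)))
  have hinit : f₁ c = f₂ c := by
    simp only [hf₁def, hf₂def]
    refine Prod.ext ?_ ?_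
    · show v c = v (2 * c - c); congr 1; ring
    · show v' c = -v' (2 * c - c)
      rw [show 2 * c - c = c by ring, hv'c0]; ring
  have hEq : EqOn f₁ f₂ (Icc a b) :=
    ODE_solution_unique_of_mem_Icc (fun t _ => hFlip t) hacb h1c h1d h1s h2c h2d h2s hinit
  have h2cL : 2 * c = L := by
    rcases lt_trichotomy (2 * c) L with h | h | h
    · exfalso
      have haz : a = 0 := max_eq_left (by linarith)
      have h0m : (0 : ℝ) ∈ Icc a b := by
        rw [haz]; exact ⟨le_refl 0, le_min hL.le (by linarith [hcIoo.1])⟩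
      have := congrArg Prod.fst (hEq h0m)
      simp only [hf₁def, hf₂def] at this
      have hv2c : v (2 * c) = 0 := by
        rw [show 2 * c - 0 = 2 * c by ring] at this
        rw [← this, h0]
      exact (hpos (2 * c) ⟨by linarith [hcIoo.1], h⟩).ne' hv2c
    · exact h
    · exfalso
      have hbz : b = L := min_eq_left (by linarith)
      have hLm : L ∈ Icc a b := by
        rw [hbz]; exact ⟨le_trans (max_le hL.le (by linarith [hcIoo.2])) le_rfl, le_refl L⟩
      have := congrArg Prod.fst (hEq hLm)
      simp only [hf₁def, hf₂def] at this
      have : v (2 * c - L) = 0 := by rw [← this, hLval]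
      exact (hpos (2 * c - L) ⟨by linarith, by linarith [hcIoo.2]⟩).ne' this
  have haz : a = 0 := by rw [hadef, h2cL]; simp
  have hbz : b = L := by rw [hbdef, h2cL]; simp
  constructor
  · intro x hx
    have hm : x ∈ Icc a b := by rw [haz, hbz]; exact hx
    have := congrArg Prod.fst (hEq hm)
    simpa [hf₁def, hf₂def, h2cL] using this
  · have hm : (0 : ℝ) ∈ Icc a b := by rw [haz, hbz]; exact ⟨le_refl 0, hL.le⟩
    have := congrArg Prod.snd (hEq hm)
    simp only [hf₁def, hf₂def] at this
    rw [this, show 2 * c - 0 = L by rw [← h2cL]; ring]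
end

section
/- Let p > 2 and α, β > 0, and let W, ρ : ℝ → ℝ be measurable functions with W(x) ≥ α and 0 ≤ ρ(x) ≤ β for almost every x ∈ ℝ. Let u : ℝ → ℝ be continuously differentiable with locally Lipschitz derivative and satisfy −u″(x) + W(x)·u(x) = ρ(x)·|u(x)|^{p−2}·u(x) for almost every x ∈ ℝ (u″ being the almost-everywhere derivative of u′). If x̄ ∈ ℝ is a local maximum point of |u| (i.e. there is δ > 0 with |u(y)| ≤ |u(x̄)| for all y with |y − x̄| ≤ δ) and u(x̄) ≠ 0, then |u(x̄)| ≥ (α/β)^{1/(p−2)}. -/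
open MeasureTheory

open Filter Set intervalIntegral

lemma slope_tendsto_aux (g : ℝ → ℝ) (d x : ℝ) (hg : HasDerivAt g d x)
    (hn : ℕ → ℝ) (hpos : ∀ n, hn n ≠ 0) (ht : Filter.Tendsto hn atTop (nhds 0)) :
    Filter.Tendsto (fun n => (g (x + hn n) - g x) / hn n) atTop (nhds d) := by
  have h1 := hasDerivAt_iff_tendsto_slope.1 hg
  have h2 : Filter.Tendsto (fun n => x + hn n) atTop (nhdsWithin x {x}ᶜ) := by
    rw [tendsto_nhdsWithin_iff]
    constructor
    · have := tendsto_const_nhds (x := x) (f := atTop (α := ℕ)) |>.add ht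
      simpa using this
    · exact Filter.Eventually.of_forall fun n => by simp [hpos n]
  have := h1.comp h2
  convert this using 2 with n
  simp [slope_def_field, add_sub_cancel_left]

lemma ftc_lip (f f' : ℝ → ℝ) (a b e c : ℝ) (hab : a ≤ b) (he : 0 < e)
    (hcont : Continuous f) (K : NNReal)
    (hlip : LipschitzOnWith K f (Set.Icc a (b + e)))
    (hderiv : ∀ᵐ x ∂(volume : Measure ℝ),
      x ∈ Set.Icc a b → HasDerivAt f (f' x) x ∧ c ≤ f' x) :
    c * (b - a) ≤ f b - f a := by
  set hn : ℕ → ℝ := fun n => e / (n + 1) with hhn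
  have hpos : ∀ n, 0 < hn n := fun n => by positivity
  have hle : ∀ n, hn n ≤ e := fun n => by
    rw [hhn]
    rw [div_le_iff₀ (by positivity)]
    nlinarith [Nat.cast_nonneg (α := ℝ) n]
  have htend : Filter.Tendsto hn atTop (nhds 0) := by
    have h0 := tendsto_one_div_add_atTop_nhds_zero_nat (𝕜 := ℝ)
    have h1 := h0.const_mul e
    rw [mul_zero] at h1
    exact h1.congr fun n => by simp [hhn, div_eq_mul_inv]
  set F : ℕ → ℝ → ℝ := fun n x => (f (x + hn n) - f x) / hn n with hF
  have hFcont : ∀ n, Continuous (F n) := fun n => by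
    exact ((hcont.comp (continuous_id.add continuous_const)).sub hcont).div_const _
  have hdist := lipschitzOnWith_iff_dist_le_mul.1 hlip
  have hbound : ∀ n, ∀ x ∈ Set.Icc a b, |F n x| ≤ (K : ℝ) := by
    intro n x hx
    have hx1 : x ∈ Set.Icc a (b + e) := ⟨hx.1, by linarith [hx.2]⟩
    have hx2 : x + hn n ∈ Set.Icc a (b + e) := by
      constructor
      · linarith [hx.1, (hpos n).le]
      · linarith [hx.2, hle n]
    have := hdist (x + hn n) hx2 x hx1
    rw [Real.dist_eq, Real.dist_eq] at this
    rw [hF]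
    simp only [abs_div, abs_of_pos (hpos n)]
    rw [div_le_iff₀ (hpos n)]
    calc |f (x + hn n) - f x| ≤ K * |x + hn n - x| := this
      _ = K * hn n := by rw [add_sub_cancel_left, abs_of_pos (hpos n)]
  -- a.e. convergence of F n to f' on Icc a b
  have hlim : ∀ᵐ x ∂(volume : Measure ℝ), x ∈ Set.Icc a b →
      Filter.Tendsto (fun n => F n x) atTop (nhds (f' x)) := by
    filter_upwards [hderiv] with x hx hmem
    exact slope_tendsto_aux f (f' x) x (hx hmem).1 hn (fun n => (hpos n).ne') htend
  -- Step 1: DCT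
  have step1 : Filter.Tendsto (fun n => ∫ x in a..b, F n x) atTop
      (nhds (∫ x in a..b, f' x)) := by
    apply intervalIntegral.tendsto_integral_filter_of_dominated_convergence
      (bound := fun _ => (K : ℝ))
    · exact Filter.Eventually.of_forall fun n => (hFcont n).aestronglyMeasurable
    · refine Filter.Eventually.of_forall fun n => Filter.Eventually.of_forall fun x hx => ?_
      rw [Set.uIoc_of_le hab] at hx
      exact hbound n x ⟨hx.1.le, hx.2⟩
    · exact intervalIntegrable_const
    · filter_upwards [hlim] with x hx hmem
      rw [Set.uIoc_of_le hab] at hmem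
      exact hx ⟨hmem.1.le, hmem.2⟩
  -- Step 2: integral of f' is at least c * (b - a)
  have hf'meas : AEStronglyMeasurable f' (volume.restrict (Set.Ioc a b)) := by
    apply aestronglyMeasurable_of_tendsto_ae atTop
      (fun n => (hFcont n).aestronglyMeasurable)
    rw [ae_restrict_iff' measurableSet_Ioc]
    filter_upwards [hlim] with x hx hmem
    exact hx ⟨hmem.1.le, hmem.2⟩
  have hf'bd : ∀ᵐ x ∂(volume.restrict (Set.Ioc a b)), ‖f' x‖ ≤ (K : ℝ) := by
    rw [ae_restrict_iff' measurableSet_Ioc]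
    filter_upwards [hlim] with x hx hmem
    have hxm : x ∈ Set.Icc a b := ⟨hmem.1.le, hmem.2⟩
    have := hx hxm
    have hnorm : Filter.Tendsto (fun n => |F n x|) atTop (nhds |f' x|) := this.abs
    exact le_of_tendsto hnorm (Filter.Eventually.of_forall fun n => hbound n x hxm)
  have hf'int : IntegrableOn f' (Set.Ioc a b) volume := by
    have : IsFiniteMeasure (volume.restrict (Set.Ioc a b)) := by
      constructor
      rw [Measure.restrict_apply_univ, Real.volume_Ioc]
      exact ENNReal.ofReal_lt_top
    exact Integrable.mono' (integrable_const (K : ℝ)) hf'meas hf'bd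
  have step2 : c * (b - a) ≤ ∫ x in a..b, f' x := by
    rw [intervalIntegral.integral_of_le hab]
    have hcle : (fun _ : ℝ => c) ≤ᵐ[volume.restrict (Set.Ioc a b)] f' := by
      have : ∀ᵐ x ∂(volume.restrict (Set.Ioc a b)), c ≤ f' x := by
        rw [ae_restrict_iff' measurableSet_Ioc]
        filter_upwards [hderiv] with x hx hmem
        exact (hx ⟨hmem.1.le, hmem.2⟩).2
      exact this
    have : IsFiniteMeasure (volume.restrict (Set.Ioc a b)) := by
      constructor
      rw [Measure.restrict_apply_univ, Real.volume_Ioc]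
      exact ENNReal.ofReal_lt_top
    have := MeasureTheory.integral_mono_ae (integrable_const c) hf'int hcle
    calc c * (b - a) = ∫ _ in Set.Ioc a b, c ∂volume := by
          rw [MeasureTheory.setIntegral_const, Real.volume_real_Ioc_of_le hab, smul_eq_mul,
            mul_comm]
      _ ≤ ∫ x in Set.Ioc a b, f' x ∂volume := this
  -- Step 3: the integrals of F n tend to f b - f a
  set G : ℝ → ℝ := fun y => ∫ x in a..y, f x with hG
  have hGderiv : ∀ y, HasDerivAt G (f y) y := fun y =>
    (hcont.integral_hasStrictDerivAt a y).hasDerivAt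
  have hFn_eq : ∀ n, (∫ x in a..b, F n x)
      = (G (b + hn n) - G b) / hn n - (G (a + hn n) - G a) / hn n := by
    intro n
    have hint1 : IntervalIntegrable (fun x => f (x + hn n)) volume a b :=
      (hcont.comp (continuous_id.add continuous_const)).intervalIntegrable a b
    have hint2 : IntervalIntegrable f volume a b := hcont.intervalIntegrable a b
    have e1 : (∫ x in a..b, F n x) = ((∫ x in a..b, f (x + hn n)) - ∫ x in a..b, f x) / hn n := by
      rw [hF]
      simp only
      rw [intervalIntegral.integral_div, intervalIntegral.integral_sub hint1 hint2]
    have e2 : (∫ x in a..b, f (x + hn n)) = ∫ x in (a + hn n)..(b + hn n), f x :=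
      intervalIntegral.integral_comp_add_right f (hn n)
    have e3 : G (a + hn n) + (∫ x in (a + hn n)..(b + hn n), f x) = G (b + hn n) :=
      intervalIntegral.integral_add_adjacent_intervals
        (hcont.intervalIntegrable a (a + hn n)) (hcont.intervalIntegrable (a + hn n) (b + hn n))
    have hGa : G a = 0 := intervalIntegral.integral_same
    have hGb : G b = ∫ x in a..b, f x := rfl
    rw [e1, e2, ← e3, hGa, ← hGb]
    ring
  have step3 : Filter.Tendsto (fun n => ∫ x in a..b, F n x) atTop (nhds (f b - f a)) := by
    have t1 := slope_tendsto_aux G (f b) b (hGderiv b) hn (fun n => (hpos n).ne') htend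
    have t2 := slope_tendsto_aux G (f a) a (hGderiv a) hn (fun n => (hpos n).ne') htend
    have := t1.sub t2
    apply this.congr
    intro n
    exact (hFn_eq n).symm
  have hEq : (∫ x in a..b, f' x) = f b - f a := tendsto_nhds_unique step1 step3
  linarith [step2, hEq.le, hEq.ge]

open Filter Set intervalIntegral
lemma key_pos (p α β : ℝ) (hp : 2 < p) (hα : 0 < α) (hβ : 0 < β)
    (W ρ : ℝ → ℝ)
    (hW : ∀ᵐ x ∂(volume : Measure ℝ), α ≤ W x)
    (hρ : ∀ᵐ x ∂(volume : Measure ℝ), 0 ≤ ρ x ∧ ρ x ≤ β)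
    (u u' u'' : ℝ → ℝ)
    (hu : ∀ x, HasDerivAt u (u' x) x)
    (hu'cont : Continuous u')
    (hu'lip : LocallyLipschitz u')
    (hu'' : ∀ᵐ x ∂(volume : Measure ℝ), HasDerivAt u' (u'' x) x)
    (heq : ∀ᵐ x ∂(volume : Measure ℝ),
      -u'' x + W x * u x = ρ x * (|u x| ^ (p - 2) * u x))
    (x₀ δ : ℝ) (hδ : 0 < δ)
    (hmax : ∀ y, |y - x₀| ≤ δ → |u y| ≤ |u x₀|)
    (hupos : 0 < u x₀) :
    (α / β) ^ (1 / (p - 2)) ≤ u x₀ := by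
  by_contra hcon
  push_neg at hcon
  have hp2 : (0 : ℝ) < p - 2 := by linarith
  have hucont : Continuous u := continuous_iff_continuousAt.2 fun x => (hu x).continuousAt
  have habs0 : |u x₀| = u x₀ := abs_of_pos hupos
  -- ε > 0
  set ε : ℝ := α - β * u x₀ ^ (p - 2) with hεdef
  have hε : 0 < ε := by
    have h1 : u x₀ ^ (p - 2) < ((α / β) ^ (1 / (p - 2))) ^ (p - 2) :=
      Real.rpow_lt_rpow hupos.le hcon hp2
    have h2 : ((α / β) ^ (1 / (p - 2))) ^ (p - 2) = α / β := by
      rw [← Real.rpow_mul (by positivity), one_div, inv_mul_cancel₀ hp2.ne', Real.rpow_one]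
    rw [h2] at h1
    have h3 : β * u x₀ ^ (p - 2) < α := by
      rw [mul_comm]
      exact (lt_div_iff₀ hβ).1 h1
    rw [hεdef]; linarith
  -- neighborhood where u > u x₀ / 2
  have hopen : IsOpen (u ⁻¹' (Set.Ioi (u x₀ / 2))) := isOpen_Ioi.preimage hucont
  have hx₀mem : x₀ ∈ u ⁻¹' (Set.Ioi (u x₀ / 2)) := by
    simp only [Set.mem_preimage, Set.mem_Ioi]; linarith
  obtain ⟨r₁, hr₁, hball₁⟩ := Metric.isOpen_iff.1 hopen x₀ hx₀mem
  -- Lipschitz neighborhood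
  obtain ⟨K, t, ht, hKlip⟩ := hu'lip x₀
  obtain ⟨r₂, hr₂, hball₂⟩ := Metric.mem_nhds_iff.1 ht
  set η : ℝ := min δ (min (r₁ / 2) (r₂ / 4)) with hηdef
  have hη : 0 < η := by positivity
  have hηδ : η ≤ δ := min_le_left _ _
  have hηr₁ : η ≤ r₁ / 2 := le_trans (min_le_right _ _) (min_le_left _ _)
  have hηr₂ : η ≤ r₂ / 4 := le_trans (min_le_right _ _) (min_le_right _ _)
  set e : ℝ := r₂ / 4 with hedef
  have he : 0 < e := by positivity
  set c : ℝ := (u x₀ / 2) * ε with hcdef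
  have hc : 0 < c := by positivity
  -- a.e. lower bound on u'' on [x₀, x₀ + η]
  have haeI : ∀ᵐ x ∂(volume : Measure ℝ), x ∈ Set.Icc x₀ (x₀ + η) →
      HasDerivAt u' (u'' x) x ∧ c ≤ u'' x := by
    filter_upwards [hW, hρ, hu'', heq] with x hWx hρx hdx heqx hx
    refine ⟨hdx, ?_⟩
    have hxd : |x - x₀| ≤ η := by
      rw [abs_le]; constructor <;> [linarith [hx.1]; linarith [hx.2]]
    have hxball : x ∈ Metric.ball x₀ r₁ := by
      rw [Metric.mem_ball, Real.dist_eq]; linarith [abs_le.1 hxd]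
      -- |x - x₀| ≤ η ≤ r₁/2 < r₁
    have hux : u x₀ / 2 < u x := hball₁ hxball
    have hx0pos : 0 < u x := by linarith
    have habs2 : |u x| ≤ u x₀ := by
      have := hmax x (le_trans hxd hηδ)
      rwa [habs0] at this
    have hpow : |u x| ^ (p - 2) ≤ u x₀ ^ (p - 2) :=
      Real.rpow_le_rpow (abs_nonneg _) habs2 hp2.le
    have hu''eq : u'' x = W x * u x - ρ x * (|u x| ^ (p - 2) * u x) := by linarith
    have hpownn : (0:ℝ) ≤ |u x| ^ (p - 2) := Real.rpow_nonneg (abs_nonneg _) _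
    have h5 : ρ x * (|u x| ^ (p - 2) * u x) ≤ β * (u x₀ ^ (p - 2) * u x) := by
      have s1 : ρ x * (|u x| ^ (p - 2) * u x) ≤ β * (|u x| ^ (p - 2) * u x) :=
        mul_le_mul_of_nonneg_right hρx.2 (by positivity)
      have s2 : |u x| ^ (p - 2) * u x ≤ u x₀ ^ (p - 2) * u x :=
        mul_le_mul_of_nonneg_right hpow hx0pos.le
      have s3 : β * (|u x| ^ (p - 2) * u x) ≤ β * (u x₀ ^ (p - 2) * u x) :=
        mul_le_mul_of_nonneg_left s2 hβ.le
      linarith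
    have h6 : α * u x ≤ W x * u x := mul_le_mul_of_nonneg_right hWx hx0pos.le
    have h7 : u x * ε ≤ u'' x := by
      have hr : α * u x - β * (u x₀ ^ (p - 2) * u x) = u x * ε := by rw [hεdef]; ring
      linarith
    have h8 : c ≤ u x * ε := by
      rw [hcdef]
      nlinarith [hε, hux]
    linarith
  -- u' x₀ = 0
  have hmaxloc : IsLocalMax u x₀ := by
    have : Metric.closedBall x₀ η ∈ nhds x₀ := Metric.closedBall_mem_nhds x₀ hη
    refine Filter.eventually_of_mem this fun y hy => ?_
    rw [Metric.mem_closedBall, Real.dist_eq] at hy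
    have := hmax y (le_trans hy hηδ)
    rw [habs0] at this
    exact le_trans (le_abs_self _) this
  have hu'0 : u' x₀ = 0 := hmaxloc.hasDerivAt_eq_zero (hu x₀)
  -- for x ∈ Ioo x₀ (x₀+η), u' x > 0
  have hderivpos : ∀ x ∈ Set.Ioo x₀ (x₀ + η), 0 < u' x := by
    intro x hx
    have hxx : x₀ ≤ x := hx.1.le
    have hlipOn : LipschitzOnWith K u' (Set.Icc x₀ (x + e)) := by
      apply hKlip.mono
      intro y hy
      apply hball₂
      rw [Metric.mem_ball, Real.dist_eq, abs_lt]
      constructor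
      · linarith [hy.1]
      · have : y ≤ x + e := hy.2
        have : x ≤ x₀ + η := hx.2.le
        linarith [hy.2, hx.2.le]
    have hderiv' : ∀ᵐ z ∂(volume : Measure ℝ), z ∈ Set.Icc x₀ x →
        HasDerivAt u' (u'' z) z ∧ c ≤ u'' z := by
      filter_upwards [haeI] with z hz hmem
      exact hz ⟨hmem.1, le_trans hmem.2 hx.2.le⟩
    have := ftc_lip u' u'' x₀ x e c hxx he hu'cont K hlipOn hderiv'
    rw [hu'0] at this
    have hcx : 0 < c * (x - x₀) :=
      mul_pos hc (by linarith [hx.1])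
    linarith
  -- u is strictly monotone on [x₀, x₀+η]
  have hmono : StrictMonoOn u (Set.Icc x₀ (x₀ + η)) := by
    apply strictMonoOn_of_deriv_pos (convex_Icc _ _) hucont.continuousOn
    intro x hx
    rw [interior_Icc] at hx
    rw [(hu x).deriv]
    exact hderivpos x hx
  have hlt : u x₀ < u (x₀ + η) := by
    apply hmono (Set.left_mem_Icc.2 (by linarith)) (Set.right_mem_Icc.2 (by linarith))
    linarith
  have : |u (x₀ + η)| ≤ u x₀ := by
    have := hmax (x₀ + η) (by rw [add_sub_cancel_left, abs_of_pos hη]; exact hηδ)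
    rwa [habs0] at this
  linarith [le_abs_self (u (x₀ + η))]

/-- Lower bound on nonzero local maxima of `|u|` for solutions of
`−u″ + W u = ρ |u|^{p−2} u` with `W ≥ α > 0` and `0 ≤ ρ ≤ β` a.e. -/
theorem stmt_9 (p α β : ℝ) (hp : 2 < p) (hα : 0 < α) (hβ : 0 < β)
    (W ρ : ℝ → ℝ) (hWmeas : Measurable W) (hρmeas : Measurable ρ)
    (hW : ∀ᵐ x ∂(volume : Measure ℝ), α ≤ W x)
    (hρ : ∀ᵐ x ∂(volume : Measure ℝ), 0 ≤ ρ x ∧ ρ x ≤ β)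
    (u u' u'' : ℝ → ℝ)
    (hu : ∀ x, HasDerivAt u (u' x) x)
    (hu'cont : Continuous u')
    (hu'lip : LocallyLipschitz u')
    (hu'' : ∀ᵐ x ∂(volume : Measure ℝ), HasDerivAt u' (u'' x) x)
    (heq : ∀ᵐ x ∂(volume : Measure ℝ),
      -u'' x + W x * u x = ρ x * (|u x| ^ (p - 2) * u x))
    (x₀ δ : ℝ) (hδ : 0 < δ)
    (hmax : ∀ y, |y - x₀| ≤ δ → |u y| ≤ |u x₀|)
    (hne : u x₀ ≠ 0) :
    (α / β) ^ (1 / (p - 2)) ≤ |u x₀| := by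
  rcases lt_or_gt_of_ne hne with hneg | hpos
  · -- u x₀ < 0: apply key_pos to -u
    have habs : |u x₀| = -u x₀ := abs_of_neg hneg
    rw [habs]
    have heq' : ∀ᵐ x ∂(volume : Measure ℝ),
        -(-u'' x) + W x * (-u x) = ρ x * (|(-u x)| ^ (p - 2) * (-u x)) := by
      filter_upwards [heq] with x hx
      rw [abs_neg]
      linarith
    exact key_pos p α β hp hα hβ W ρ hW hρ (fun x => -u x) (fun x => -u' x) (fun x => -u'' x)
      (fun x => (hu x).neg) hu'cont.neg
      ((isometry_neg : Isometry (Neg.neg : ℝ → ℝ)).lipschitz.locallyLipschitz.comp hu'lip)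
      (by filter_upwards [hu''] with x hx; exact hx.neg)
      heq' x₀ δ hδ
      (fun y hy => by simpa [abs_neg] using hmax y hy)
      (by simpa using hneg)
  · rw [abs_of_pos hpos]
    exact key_pos p α β hp hα hβ W ρ hW hρ u u' u'' hu hu'cont hu'lip hu'' heq x₀ δ hδ
      hmax hpos
end

section
/- Let W : [0, ∞) → ℝ be measurable with W(x) ≥ 0 for almost every x ≥ 0, and let φ : [0, ∞) → ℝ be continuously differentiable with locally Lipschitz derivative and satisfy −φ″(x) + W(x)·φ(x) ≥ 0 for almost every x ≥ 0 (φ″ being the almost-everywhere derivative of φ′). Then exactly one of the following holds: either φ(x) ≥ min(φ(0), 0) for every x ≥ 0, or φ(x) → −∞ as x → +∞. In particular, if φ is bounded below and inf_{[0,∞)} φ < 0, then inf_{[0,∞)} φ = φ(0). -/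
open MeasureTheory Set Filter Topology

lemma clem (φ' : ℝ → ℝ) (K : NNReal) {v : ℝ}
    (hcont : ContinuousOn φ' (Set.Ici 0))
    (hK : LipschitzOnWith K φ' (Set.Icc 0 (v+1))) {c : ℝ}
    (hc : 0 ≤ c) (hcv : c ≤ v) :
    Tendsto (fun n : ℕ => (∫ x in c..(c + 1/(n+1)), φ' x) * (n+1)) atTop (𝓝 (φ' c)) := by
  have hKn : (0:ℝ) ≤ K := K.coe_nonneg
  have hsq : ∀ n : ℕ, ‖(∫ x in c..(c + 1/(n+1)), φ' x) * (n+1) - φ' c‖ ≤ K * (1/(n+1)) := by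
    intro n
    set h : ℝ := 1/(n+1) with hh
    have hn1 : (0:ℝ) < (n:ℝ)+1 := by positivity
    have hpos : 0 < h := by positivity
    have hle1 : h ≤ 1 := by
      rw [hh]
      rw [div_le_one hn1]
      linarith [Nat.cast_nonneg (α := ℝ) n]
    have hsub : Set.uIcc c (c + h) ⊆ Set.Icc 0 (v+1) := by
      rw [Set.uIcc_of_le (by linarith)]
      intro x hx
      exact ⟨le_trans hc hx.1, by linarith [hx.2]⟩
    have hint : IntervalIntegrable φ' volume c (c + h) :=
      (hcont.mono (fun x hx => le_trans hc (by
        rw [Set.uIcc_of_le (by linarith)] at hx; exact hx.1))).intervalIntegrable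
    have hint2 : IntervalIntegrable (fun x => φ' x - φ' c) volume c (c + h) :=
      hint.sub intervalIntegrable_const
    have hsplit : (∫ x in c..(c + h), φ' x) = (∫ x in c..(c+h), (φ' x - φ' c)) + h * φ' c := by
      rw [intervalIntegral.integral_sub hint intervalIntegrable_const,
        intervalIntegral.integral_const, smul_eq_mul]
      ring
    have hbd : ‖∫ x in c..(c+h), (φ' x - φ' c)‖ ≤ (K * h) * |c + h - c| := by
      apply intervalIntegral.norm_integral_le_of_norm_le_const
      intro x hx
      rw [Set.uIoc_of_le (by linarith)] at hx
      have hx1 : x ∈ Set.Icc 0 (v+1) := ⟨le_trans hc hx.1.le, by linarith [hx.2]⟩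
      have hc1 : c ∈ Set.Icc 0 (v+1) := ⟨hc, by linarith⟩
      have := hK.dist_le_mul x hx1 c hc1
      rw [Real.dist_eq, Real.dist_eq] at this
      calc ‖φ' x - φ' c‖ ≤ K * |x - c| := this
        _ ≤ K * h := by
            apply mul_le_mul_of_nonneg_left _ hKn
            rw [abs_of_nonneg (by linarith [hx.1.le])]
            linarith [hx.2]
    have habs : |c + h - c| = h := by rw [show c + h - c = h by ring, abs_of_pos hpos]
    rw [habs] at hbd
    have hinv : h * ((n:ℝ)+1) = 1 := by
      rw [hh]; field_simp
    have hrw : (∫ x in c..(c + h), φ' x) * ((n:ℝ)+1) - φ' c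
        = (∫ x in c..(c+h), (φ' x - φ' c)) * ((n:ℝ)+1) := by
      rw [hsplit]; linear_combination φ' c * hinv

    calc ‖(∫ x in c..(c + h), φ' x) * ((n:ℝ)+1) - φ' c‖
        = ‖(∫ x in c..(c+h), (φ' x - φ' c))‖ * ((n:ℝ)+1) := by
          rw [hrw, norm_mul, Real.norm_eq_abs ((n:ℝ)+1), abs_of_pos hn1]
      _ ≤ ((K:ℝ) * h * h) * ((n:ℝ)+1) :=
          mul_le_mul_of_nonneg_right hbd (by positivity)
      _ = (K:ℝ) * h := by linear_combination ((K:ℝ) * h) * hinv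
  have hz : Tendsto (fun n : ℕ => (K:ℝ) * (1/(n+1))) atTop (𝓝 0) := by
    have := (tendsto_one_div_add_atTop_nhds_zero_nat : Tendsto (fun n : ℕ => 1 / ((n : ℝ) + 1)) atTop (𝓝 0))
    simpa using this.const_mul (K:ℝ)
  have := squeeze_zero_norm hsq hz
  have h2 : Tendsto (fun n : ℕ => ((∫ x in c..(c + 1/(n+1)), φ' x) * (n+1) - φ' c) + φ' c)
      atTop (𝓝 (0 + φ' c)) := this.add_const _
  simpa using h2

lemma keylem (W φ φ' φ'' : ℝ → ℝ)
    (hW : ∀ᵐ x ∂(volume.restrict (Set.Ici (0 : ℝ))), 0 ≤ W x)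
    (hφ'cont : ContinuousOn φ' (Set.Ici 0))
    (hφ'lip : ∀ R > (0 : ℝ), ∃ K, LipschitzOnWith K φ' (Set.Icc 0 R))
    (hφ'' : ∀ᵐ x ∂(volume.restrict (Set.Ici (0 : ℝ))), HasDerivAt φ' (φ'' x) x)
    (hineq : ∀ᵐ x ∂(volume.restrict (Set.Ici (0 : ℝ))),
      0 ≤ -φ'' x + W x * φ x)
    {u v : ℝ} (hu : 0 ≤ u) (huv : u ≤ v)
    (hneg : ∀ x ∈ Set.Icc u v, φ x ≤ 0) :
    φ' v ≤ φ' u := by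
  obtain ⟨K, hK⟩ := hφ'lip (v + 1) (by linarith)
  set μ := volume.restrict (Set.Ioc u v) with hμ
  have hsub : Set.Ioc u v ⊆ Set.Ici (0:ℝ) := fun x hx => le_trans hu hx.1.le
  have haemono : ∀ {p : ℝ → Prop}, (∀ᵐ x ∂(volume.restrict (Set.Ici (0:ℝ))), p x) →
      (∀ᵐ x ∂μ, p x) := by
    intro p hp
    exact ae_mono (Measure.restrict_mono hsub le_rfl) hp
  -- sequence of difference quotients
  set q : ℕ → ℝ → ℝ := fun n x => (φ' (x + 1/(n+1)) - φ' x) * (n+1) with hq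
  have hhn : ∀ n : ℕ, (0:ℝ) < 1/(n+1) ∧ (1:ℝ)/(n+1) ≤ 1 := by
    intro n
    have hn1 : (0:ℝ) < (n:ℝ)+1 := by positivity
    constructor
    · positivity
    · rw [div_le_one hn1]; linarith [Nat.cast_nonneg (α := ℝ) n]
  -- A : DCT
  have hAESM : ∀ n : ℕ, AEStronglyMeasurable (q n) μ := by
    intro n
    apply ContinuousOn.aestronglyMeasurable _ measurableSet_Ioc
    apply ContinuousOn.mul _ continuousOn_const
    apply ContinuousOn.sub
    · apply (hφ'cont.comp ((continuous_add_right (1/(n+1):ℝ)).continuousOn))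
      intro x hx
      have := (hhn n).1
      have := hsub hx
      simp only [Set.mem_Ici] at *
      linarith
    · exact hφ'cont.mono hsub
  have hbound : ∀ n : ℕ, ∀ᵐ x ∂μ, ‖q n x‖ ≤ (K:ℝ) := by
    intro n
    filter_upwards [ae_restrict_mem measurableSet_Ioc] with x hx
    have h1 := (hhn n).1
    have h2 := (hhn n).2
    have hn1 : (0:ℝ) < (n:ℝ)+1 := by positivity
    have hx1 : x ∈ Set.Icc 0 (v+1) := ⟨le_trans hu hx.1.le, by linarith [hx.2]⟩
    have hx2 : x + 1/(n+1) ∈ Set.Icc 0 (v+1) := ⟨by linarith [hx1.1], by linarith [hx.2]⟩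
    have hd := hK.dist_le_mul _ hx2 _ hx1
    rw [Real.dist_eq, Real.dist_eq] at hd
    have habs : |x + 1/(n+1) - x| = 1/(n+1) := by
      rw [show x + 1/(n+1) - x = 1/((n:ℝ)+1) by ring, abs_of_pos h1]
    rw [habs] at hd
    have hinv : (1/((n:ℝ)+1)) * ((n:ℝ)+1) = 1 := by field_simp
    calc ‖q n x‖ = |φ' (x + 1/(n+1)) - φ' x| * ((n:ℝ)+1) := by
          rw [hq]; rw [norm_mul, Real.norm_eq_abs, Real.norm_eq_abs, abs_of_pos hn1]
      _ ≤ ((K:ℝ) * (1/(n+1))) * ((n:ℝ)+1) := mul_le_mul_of_nonneg_right hd (by positivity)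
      _ = (K:ℝ) := by rw [mul_assoc, hinv, mul_one]
  have htend : ∀ᵐ x ∂μ, Tendsto (fun n => q n x) atTop (𝓝 (φ'' x)) := by
    filter_upwards [haemono hφ''] with x hx
    have hslope := hasDerivAt_iff_tendsto_slope.mp hx
    have hseq : Tendsto (fun n : ℕ => x + 1/(n+1)) atTop (𝓝[≠] x) := by
      apply tendsto_nhdsWithin_of_tendsto_nhds_of_eventually_within
      · have := (tendsto_one_div_add_atTop_nhds_zero_nat : Tendsto (fun n : ℕ => 1 / ((n : ℝ) + 1)) atTop (𝓝 0))
        have h2 : Tendsto (fun n : ℕ => x + 1/((n:ℝ)+1)) atTop (𝓝 (x + 0)) :=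
          tendsto_const_nhds.add (by simpa using this)
        simpa using h2
      · apply Filter.Eventually.of_forall
        intro n
        have := (hhn n).1
        simp only [Set.mem_compl_iff, Set.mem_singleton_iff]
        intro hcon
        nlinarith [(hhn n).1]
    have := hslope.comp hseq
    convert this using 2 with n
    show (φ' (x + 1/(n+1)) - φ' x) * ((n:ℝ)+1) = slope φ' x (x + 1/(n+1))
    have hn0 : (0:ℝ) < 1/((n:ℝ)+1) := (hhn n).1
    rw [slope_def_field, show x + 1/((n:ℝ)+1) - x = 1/((n:ℝ)+1) from by ring,
      eq_div_iff hn0.ne']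
    field_simp
  haveI : IsFiniteMeasure μ := by
    constructor
    rw [hμ, Measure.restrict_apply_univ]
    exact measure_Ioc_lt_top
  have hDCT := MeasureTheory.tendsto_integral_of_dominated_convergence
    (fun _ => (K:ℝ)) hAESM (integrable_const _) hbound htend
  have hint : ∀ a b : ℝ, 0 ≤ a → a ≤ b → IntervalIntegrable φ' volume a b := by
    intro a b ha hab
    apply (hφ'cont.mono _).intervalIntegrable
    rw [Set.uIcc_of_le hab]
    exact fun x hx => le_trans ha hx.1
  -- B : compute ∫ q n
  have hB : ∀ n : ℕ, (∫ x, q n x ∂μ) =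
      (∫ x in v..(v + 1/(n+1)), φ' x) * ((n:ℝ)+1)
        - (∫ x in u..(u + 1/(n+1)), φ' x) * ((n:ℝ)+1) := by
    intro n
    have h1 := (hhn n).1
    set d : ℝ := 1/(n+1) with hd
    have hint0 : IntervalIntegrable φ' volume u v := hint u v hu huv
    have hintsh : IntervalIntegrable (fun x => φ' (x + d)) volume u v := by
      simpa using (hint (u+d) (v+d) (by linarith) (by linarith)).comp_add_right d
    have e1 : (∫ x, q n x ∂μ) = ∫ x in u..v, q n x := by
      rw [intervalIntegral.integral_of_le huv]
    have e2 : (∫ x in u..v, q n x)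
        = (∫ x in u..v, (φ' (x + d) - φ' x)) * ((n:ℝ)+1) := by
      rw [← intervalIntegral.integral_mul_const]
    have e3 : (∫ x in u..v, (φ' (x + d) - φ' x))
        = (∫ x in u..v, φ' (x + d)) - ∫ x in u..v, φ' x :=
      intervalIntegral.integral_sub hintsh hint0
    have e4 : (∫ x in u..v, φ' (x + d)) = ∫ x in (u+d)..(v+d), φ' x :=
      intervalIntegral.integral_comp_add_right φ' d
    have c1 : (∫ x in u..(u+d), φ' x) + (∫ x in (u+d)..(v+d), φ' x)
        = ∫ x in u..(v+d), φ' x :=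
      intervalIntegral.integral_add_adjacent_intervals
        (hint u (u+d) hu (by linarith)) (hint (u+d) (v+d) (by linarith) (by linarith))
    have c2 : (∫ x in u..v, φ' x) + (∫ x in v..(v+d), φ' x)
        = ∫ x in u..(v+d), φ' x :=
      intervalIntegral.integral_add_adjacent_intervals
        (hint u v hu huv) (hint v (v+d) (by linarith) (by linarith))
    rw [e1, e2, e3, e4]
    linear_combination ((n:ℝ)+1) * c1 - ((n:ℝ)+1) * c2
  -- limits
  have hA : Tendsto (fun n : ℕ => (∫ x in v..(v + 1/(n+1)), φ' x) * ((n:ℝ)+1)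
        - (∫ x in u..(u + 1/(n+1)), φ' x) * ((n:ℝ)+1)) atTop (𝓝 (φ' v - φ' u)) :=
    (clem φ' K hφ'cont hK (le_trans hu huv) le_rfl).sub
      (clem φ' K hφ'cont hK hu huv)
  have hA' : Tendsto (fun n : ℕ => ∫ x, q n x ∂μ) atTop (𝓝 (φ' v - φ' u)) := by
    apply hA.congr
    intro n
    exact (hB n).symm
  have huniq : ∫ x, φ'' x ∂μ = φ' v - φ' u := tendsto_nhds_unique hDCT hA'
  have hnonpos : (∫ x, φ'' x ∂μ) ≤ 0 := by
    apply integral_nonpos_of_ae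
    filter_upwards [haemono hW, haemono hineq, ae_restrict_mem measurableSet_Ioc]
      with x h1 h2 h3
    have hφx : φ x ≤ 0 := hneg x ⟨h3.1.le, h3.2⟩
    have : W x * φ x ≤ 0 := mul_nonpos_of_nonneg_of_nonpos h1 hφx
    simp only [Pi.zero_apply]
    linarith
  linarith [huniq ▸ hnonpos]

/-- Maximum principle on the half-line `[0, ∞)` for `φ ↦ −φ″ + W φ`
with `W ≥ 0` a.e.: either `φ ≥ min (φ 0) 0` everywhere on `[0, ∞)`,
or `φ → −∞` at infinity — and exactly one of these occurs.  In particular,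
if `φ` is bounded below on `[0, ∞)` with negative infimum, the infimum
is attained at `0`. -/
theorem stmt_10 (W : ℝ → ℝ) (hWmeas : Measurable W)
    (hW : ∀ᵐ x ∂(volume.restrict (Set.Ici (0 : ℝ))), 0 ≤ W x)
    (φ φ' φ'' : ℝ → ℝ)
    (hφ : ∀ x ∈ Set.Ici (0 : ℝ), HasDerivWithinAt φ (φ' x) (Set.Ici 0) x)
    (hφ'cont : ContinuousOn φ' (Set.Ici 0))
    (hφ'lip : ∀ R > (0 : ℝ), ∃ K, LipschitzOnWith K φ' (Set.Icc 0 R))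
    (hφ'' : ∀ᵐ x ∂(volume.restrict (Set.Ici (0 : ℝ))), HasDerivAt φ' (φ'' x) x)
    (hineq : ∀ᵐ x ∂(volume.restrict (Set.Ici (0 : ℝ))),
      0 ≤ -φ'' x + W x * φ x) :
    Xor' (∀ x ≥ (0 : ℝ), min (φ 0) 0 ≤ φ x)
      (Filter.Tendsto φ Filter.atTop Filter.atBot) ∧
    (BddBelow (φ '' Set.Ici 0) → sInf (φ '' Set.Ici 0) < 0 →
      sInf (φ '' Set.Ici 0) = φ 0) := by
  have anti : ∀ {u v : ℝ}, 0 ≤ u → u ≤ v → (∀ x ∈ Set.Icc u v, φ x ≤ 0) → φ' v ≤ φ' u :=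
    fun hu huv hneg => keylem W φ φ' φ'' hW hφ'cont hφ'lip hφ'' hineq hu huv hneg
  have hφcont : ContinuousOn φ (Set.Ici 0) := fun x hx => (hφ x hx).continuousWithinAt
  have hderiv : ∀ x : ℝ, 0 < x → HasDerivAt φ (φ' x) x := fun x hx =>
    (hφ x hx.le).hasDerivAt (Ici_mem_nhds hx)
  have mvt : ∀ a b : ℝ, 0 ≤ a → a < b → ∃ c ∈ Set.Ioo a b, φ' c = (φ b - φ a) / (b - a) := by
    intro a b ha hab
    apply exists_hasDerivAt_eq_slope φ φ' hab
    · exact hφcont.mono (fun x hx => le_trans ha hx.1)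
    · exact fun x hx => hderiv x (lt_of_le_of_lt ha hx.1)
  -- main: somewhere below min → tendsto atBot
  have main : ∀ x₀ : ℝ, 0 ≤ x₀ → φ x₀ < min (φ 0) 0 → Tendsto φ atTop atBot := by
    intro x₀ hx₀0 hx₀
    have hφx₀neg : φ x₀ < 0 := lt_of_lt_of_le hx₀ (min_le_right _ _)
    have hφx₀lt0 : φ x₀ < φ 0 := lt_of_lt_of_le hx₀ (min_le_left _ _)
    have hx₀pos : 0 < x₀ := by
      rcases hx₀0.lt_or_eq with h | h
      · exact h
      · exact absurd (h ▸ hφx₀lt0) (lt_irrefl _)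
    -- Step 1
    obtain ⟨a, ha0, hax, haφ, hneg⟩ :
        ∃ a, 0 ≤ a ∧ a < x₀ ∧ φ x₀ < φ a ∧ ∀ x ∈ Set.Icc a x₀, φ x ≤ 0 := by
      by_cases hS : ∃ x ∈ Set.Icc 0 x₀, 0 ≤ φ x
      · set S : Set ℝ := Set.Icc 0 x₀ ∩ φ ⁻¹' Set.Ici 0 with hSdef
        have hSne : S.Nonempty := by
          obtain ⟨x, hx1, hx2⟩ := hS; exact ⟨x, hx1, hx2⟩
        have hSclosed : IsClosed S :=
          (hφcont.mono (fun x hx => hx.1)).preimage_isClosed_of_isClosed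
            isClosed_Icc isClosed_Ici
        have hSbdd : BddAbove S := (bddAbove_Icc (a := (0:ℝ)) (b := x₀)).mono
          Set.inter_subset_left
        set a := sSup S with hadef
        have haS : a ∈ S := hSclosed.csSup_mem hSne hSbdd
        have ha0 : 0 ≤ a := haS.1.1
        have hφa : 0 ≤ φ a := haS.2
        have hax : a < x₀ := lt_of_le_of_ne haS.1.2 (by
          intro h; rw [h] at hφa; linarith)
        have hlt : ∀ x, a < x → x ≤ x₀ → φ x < 0 := by
          intro x h1 h2
          by_contra h; push_neg at h
          have hxS : x ∈ S := ⟨⟨le_trans ha0 h1.le, h2⟩, h⟩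
          linarith [le_csSup hSbdd hxS]
        have hφa0 : φ a ≤ 0 := by
          have htend : Tendsto φ (𝓝[>] a) (𝓝 (φ a)) :=
            ((hφ a ha0).continuousWithinAt.mono (fun x hx => le_trans ha0 (le_of_lt hx)))
          refine le_of_tendsto htend ?_
          filter_upwards [(eventually_lt_nhds hax).filter_mono nhdsWithin_le_nhds,
            self_mem_nhdsWithin] with x h1 h2
          exact (hlt x h2 h1.le).le
        refine ⟨a, ha0, hax, by linarith, ?_⟩
        intro x hx
        rcases hx.1.lt_or_eq with h | h
        · exact (hlt x h hx.2).le
        · rw [← h]; exact hφa0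
      · push_neg at hS
        exact ⟨0, le_rfl, hx₀pos, hφx₀lt0, fun x hx => (hS x hx).le⟩
    -- Step 2 : φ ≤ 0 on [a, ∞)
    have hneg' : ∀ x, a ≤ x → φ x ≤ 0 := by
      by_contra hcon; push_neg at hcon
      obtain ⟨b, hab, hbpos⟩ := hcon
      have hbx₀ : x₀ < b := by
        by_contra h'; push_neg at h'
        linarith [hneg b ⟨hab, h'⟩]
      set Z : Set ℝ := Set.Icc x₀ b ∩ φ ⁻¹' Set.Ici 0 with hZdef
      have hZne : Z.Nonempty := ⟨b, ⟨hbx₀.le, le_rfl⟩, hbpos.le⟩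
      have hZclosed : IsClosed Z :=
        (hφcont.mono (fun x hx => le_trans hx₀0 hx.1)).preimage_isClosed_of_isClosed
          isClosed_Icc isClosed_Ici
      have hZbdd : BddBelow Z := (bddBelow_Icc : BddBelow (Set.Icc x₀ b)).mono
        Set.inter_subset_left
      set b₀ := sInf Z with hb₀def
      have hb₀Z : b₀ ∈ Z := hZclosed.csInf_mem hZne hZbdd
      have hφb₀ : 0 ≤ φ b₀ := hb₀Z.2
      have hb₀x₀ : x₀ < b₀ := lt_of_le_of_ne hb₀Z.1.1 (by
        intro h; rw [← h] at hφb₀; linarith)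
      have hltZ : ∀ x, x₀ ≤ x → x < b₀ → φ x < 0 := by
        intro x h1 h2
        by_contra h; push_neg at h
        have hxZ : x ∈ Z := ⟨⟨h1, by linarith [hb₀Z.1.2]⟩, h⟩
        linarith [csInf_le hZbdd hxZ]
      have hφb₀0 : φ b₀ ≤ 0 := by
        have hnb : (𝓝[Set.Ioo x₀ b₀] b₀).NeBot := by
          apply mem_closure_iff_nhdsWithin_neBot.mp
          rw [closure_Ioo (ne_of_lt hb₀x₀)]
          exact ⟨hb₀x₀.le, le_rfl⟩
        have htend : Tendsto φ (𝓝[Set.Ioo x₀ b₀] b₀) (𝓝 (φ b₀)) :=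
          (hφ b₀ (le_trans hx₀0 hb₀Z.1.1)).continuousWithinAt.mono
            (fun x hx => le_trans hx₀0 hx.1.le)
        refine le_of_tendsto htend ?_
        filter_upwards [self_mem_nhdsWithin] with x hx
        exact (hltZ x hx.1.le hx.2).le
      have hnegIcc : ∀ x ∈ Set.Icc a b₀, φ x ≤ 0 := by
        intro x hx
        rcases le_total x x₀ with h | h
        · exact hneg x ⟨hx.1, h⟩
        · rcases hx.2.lt_or_eq with h2 | h2
          · exact (hltZ x h h2).le
          · rw [h2]; exact hφb₀0
      obtain ⟨c₁, hc₁, hc₁eq⟩ := mvt a x₀ ha0 hax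
      obtain ⟨c₂, hc₂, hc₂eq⟩ := mvt x₀ b₀ hx₀0 hb₀x₀
      have h1 : φ' c₁ < 0 := by
        rw [hc₁eq]
        exact div_neg_of_neg_of_pos (by linarith) (by linarith)
      have h2 : 0 < φ' c₂ := by
        rw [hc₂eq]
        exact div_pos (by linarith) (by linarith)
      have hle : φ' c₂ ≤ φ' c₁ := by
        apply anti (by linarith [hc₁.1]) (by linarith [hc₁.2, hc₂.1])
        intro x hx
        exact hnegIcc x ⟨by linarith [hc₁.1, hx.1], by linarith [hc₂.2, hx.2]⟩
      linarith
    -- Step 3 : linear decay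
    obtain ⟨c, hc, hceq⟩ := mvt a x₀ ha0 hax
    set s : ℝ := (φ x₀ - φ a) / (x₀ - a) with hsdef
    have hs : s < 0 := div_neg_of_neg_of_pos (by linarith) (by linarith)
    have hbound : ∀ x, x₀ < x → φ x ≤ φ x₀ + s * (x - x₀) := by
      intro x hx
      obtain ⟨ξ, hξ, hξeq⟩ := mvt x₀ x hx₀0 hx
      have hle : φ' ξ ≤ φ' c := by
        apply anti (by linarith [hc.1]) (by linarith [hc.2, hξ.1])
        intro y hy
        exact hneg' y (by linarith [hc.1, hy.1])
      rw [hξeq, hceq] at hle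
      rw [div_le_iff₀ (by linarith)] at hle
      linarith
    have hlin : Tendsto (fun x : ℝ => φ x₀ + s * (x - x₀)) atTop atBot := by
      apply tendsto_atBot_add_const_left
      have h1 : Tendsto (fun x : ℝ => x - x₀) atTop atTop :=
        tendsto_atTop_add_const_right _ _ tendsto_id
      exact h1.const_mul_atTop_of_neg hs
    apply tendsto_atBot_mono' atTop _ hlin
    filter_upwards [eventually_gt_atTop x₀] with x hx
    exact hbound x hx
  -- exclusivity
  have excl : (∀ x ≥ (0:ℝ), min (φ 0) 0 ≤ φ x) → ¬ Tendsto φ atTop atBot := by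
    intro hP hT
    have h1 : ∀ᶠ x : ℝ in atTop, φ x ≤ min (φ 0) 0 - 1 := hT.eventually_le_atBot _
    have h2 : ∀ᶠ x : ℝ in atTop, (0:ℝ) ≤ x := eventually_ge_atTop 0
    obtain ⟨x, hx1, hx2⟩ := (h1.and h2).exists
    linarith [hP x hx2]
  constructor
  · by_cases hP : ∀ x ≥ (0:ℝ), min (φ 0) 0 ≤ φ x
    · exact Or.inl ⟨hP, excl hP⟩
    · push_neg at hP
      obtain ⟨x₀, hx₀0, hx₀⟩ := hP
      refine Or.inr ⟨main x₀ hx₀0 hx₀, ?_⟩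
      push_neg
      exact ⟨x₀, hx₀0, hx₀⟩
  · intro hbdd hinf
    by_cases hP : ∀ x ≥ (0:ℝ), min (φ 0) 0 ≤ φ x
    · have hne : (φ '' Set.Ici 0).Nonempty := ⟨φ 0, 0, Set.self_mem_Ici, rfl⟩
      have hlb : min (φ 0) 0 ≤ sInf (φ '' Set.Ici 0) := by
        apply le_csInf hne
        rintro y ⟨x, hx, rfl⟩
        exact hP x hx
      have hub : sInf (φ '' Set.Ici 0) ≤ φ 0 :=
        csInf_le hbdd ⟨0, Set.self_mem_Ici, rfl⟩
      rcases le_or_gt (φ 0) 0 with h | h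
      · rw [min_eq_left h] at hlb
        linarith
      · rw [min_eq_right h.le] at hlb
        linarith
    · push_neg at hP
      obtain ⟨x₀, hx₀0, hx₀⟩ := hP
      have hT := main x₀ hx₀0 hx₀
      exfalso
      obtain ⟨c, hc⟩ := hbdd
      have h1 : ∀ᶠ x : ℝ in atTop, φ x ≤ c - 1 := hT.eventually_le_atBot _
      have h2 : ∀ᶠ x : ℝ in atTop, (0:ℝ) ≤ x := eventually_ge_atTop 0
      obtain ⟨x, hx1, hx2⟩ := (h1.and h2).exists
      have := hc (Set.mem_image_of_mem φ hx2)
      linarith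
end

section
/- Let p > 2 and let W, ρ : ℝ → ℝ be bounded measurable functions with W(x) ≥ 0 and ρ(x) ≥ 0 for almost every x. Let u : ℝ → ℝ be continuously differentiable with locally Lipschitz derivative and satisfy −u″(x) + W(x)·u(x) = ρ(x)·|u(x)|^{p−2}·u(x) for almost every x ∈ ℝ. If u has finite Morse index, then u is stable outside a compact set: there exists R > 0 such that Q_u(φ) ≥ 0 for every test function φ whose support is contained in ℝ ∖ [−R, R]. -/
open MeasureTheory Set Filter

/-- A test function: a Lipschitz function `ℝ → ℝ` with compact support. -/
def IsTestFun (φ : ℝ → ℝ) : Prop :=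
  (∃ K, LipschitzWith K φ) ∧ HasCompactSupport φ

/-- The quadratic form associated to the linearization of
`−u″ + W u = ρ |u|^{p−2} u` at the solution `u`. -/
noncomputable def quadForm (p : ℝ) (W ρ u φ : ℝ → ℝ) : ℝ :=
  ∫ x : ℝ, ((deriv φ x) ^ 2 + W x * (φ x) ^ 2
    - (p - 1) * ρ x * |u x| ^ (p - 2) * (φ x) ^ 2)

/-- The Morse index of `u` is at least `m`: there are `m` linearly
independent test functions on whose span the quadratic form is negative. -/
def MorseIndexGE (p : ℝ) (W ρ u : ℝ → ℝ) (m : ℕ) : Prop :=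
  ∃ φ : Fin m → ℝ → ℝ, (∀ i, IsTestFun (φ i)) ∧ LinearIndependent ℝ φ ∧
    ∀ c : Fin m → ℝ, (∑ i, c i • φ i) ≠ 0 →
      quadForm p W ρ u (∑ i, c i • φ i) < 0

/-- The integrand of the quadratic form is integrable for any test function. -/
lemma aux_integrable (p : ℝ) (hp : 2 < p) (C : ℝ) (W ρ u φ : ℝ → ℝ)
    (hWmeas : Measurable W) (hρmeas : Measurable ρ)
    (hC : ∀ᵐ x ∂(volume : Measure ℝ), W x ≤ C ∧ ρ x ≤ C)
    (hW : ∀ᵐ x ∂(volume : Measure ℝ), 0 ≤ W x)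
    (hρ : ∀ᵐ x ∂(volume : Measure ℝ), 0 ≤ ρ x)
    (hucont : Continuous u) (hφ : IsTestFun φ) :
    Integrable (fun x => (deriv φ x) ^ 2 + W x * (φ x) ^ 2
      - (p - 1) * ρ x * |u x| ^ (p - 2) * (φ x) ^ 2) (volume : Measure ℝ) := by
  obtain ⟨⟨K, hK⟩, hcs⟩ := hφ
  have φc : Continuous φ := hK.continuous
  have hg : Continuous (fun x => |u x| ^ (p - 2)) :=
    (continuous_abs.comp hucont).rpow_const (fun x => Or.inr (by linarith))
  have hmeas : AEStronglyMeasurable (fun x => (deriv φ x) ^ 2 + W x * (φ x) ^ 2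
      - (p - 1) * ρ x * |u x| ^ (p - 2) * (φ x) ^ 2) (volume : Measure ℝ) := by
    apply Measurable.aestronglyMeasurable
    apply Measurable.sub
    · exact ((measurable_deriv φ).pow_const 2).add
        (hWmeas.mul (φc.measurable.pow_const 2))
    · exact ((measurable_const.mul hρmeas).mul hg.measurable).mul
        (φc.measurable.pow_const 2)
  obtain ⟨x₀, hB⟩ := (continuous_abs.comp φc).exists_forall_ge_of_hasCompactSupport
      (hcs.comp_left (g := abs) abs_zero)
  set B := |φ x₀| with hBdef
  obtain ⟨M, hM⟩ := hcs.isCompact.exists_bound_of_continuousOn hg.continuousOn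
  set C' := max C 0 with hC'def
  have hC'0 : 0 ≤ C' := le_max_right _ _
  set D := (K : ℝ) ^ 2 + C' * B ^ 2 + (p - 1) * C' * M * B ^ 2 with hDdef
  refine Integrable.mono' (g := fun x => (tsupport φ).indicator (fun _ => D) x)
    ?_ hmeas ?_
  · exact (integrableOn_const (hs := hcs.isCompact.measure_lt_top.ne)).integrable_indicator
      hcs.isCompact.measurableSet
  · filter_upwards [hC, hW, hρ] with x hCx hWx hρx
    by_cases hx : x ∈ tsupport φ
    · rw [Set.indicator_of_mem hx]
      have hd : |deriv φ x| ≤ (K : ℝ) := by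
        simpa [Real.norm_eq_abs] using norm_deriv_le_of_lipschitz (f := φ) (x₀ := x) hK
      have hb : |φ x| ≤ B := hB x
      have hg0 : 0 ≤ |u x| ^ (p - 2) := Real.rpow_nonneg (abs_nonneg _) _
      have hgx : |u x| ^ (p - 2) ≤ M := by
        have := hM x hx
        rwa [Real.norm_eq_abs, abs_of_nonneg hg0] at this
      have hM0 : 0 ≤ M := le_trans hg0 hgx
      have hWle : W x ≤ C' := le_trans hCx.1 (le_max_left _ _)
      have hρle : ρ x ≤ C' := le_trans hCx.2 (le_max_left _ _)
      have hd2 : (deriv φ x) ^ 2 ≤ (K : ℝ) ^ 2 :=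
        sq_le_sq' (by linarith [(abs_le.mp hd).1]) (abs_le.mp hd).2
      have hb2 : (φ x) ^ 2 ≤ B ^ 2 :=
        sq_le_sq' (by linarith [(abs_le.mp hb).1]) (abs_le.mp hb).2
      have hp1 : (0 : ℝ) ≤ p - 1 := by linarith
      have hWterm : 0 ≤ W x * (φ x) ^ 2 := mul_nonneg hWx (sq_nonneg _)
      have hWterm2 : W x * (φ x) ^ 2 ≤ C' * B ^ 2 :=
        mul_le_mul hWle hb2 (sq_nonneg _) hC'0
      have hAterm : 0 ≤ (p - 1) * ρ x * |u x| ^ (p - 2) * (φ x) ^ 2 :=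
        mul_nonneg (mul_nonneg (mul_nonneg hp1 hρx) hg0) (sq_nonneg _)
      have hAterm2 : (p - 1) * ρ x * |u x| ^ (p - 2) * (φ x) ^ 2
          ≤ (p - 1) * C' * M * B ^ 2 := by
        gcongr
      rw [Real.norm_eq_abs, abs_le]
      constructor
      · have h1 : 0 ≤ (deriv φ x) ^ 2 := sq_nonneg _
        nlinarith
      · have h1 : 0 ≤ (p - 1) * C' * M * B ^ 2 :=
          mul_nonneg (mul_nonneg (mul_nonneg hp1 hC'0) hM0) (sq_nonneg _)
        nlinarith
    · have h0 : φ x = 0 := image_eq_zero_of_notMem_tsupport hx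
      have hd0 : deriv φ x = 0 := by
        have h := notMem_tsupport_iff_eventuallyEq.mp hx
        rw [h.deriv_eq]
        exact deriv_const x 0
      simp [h0, hd0, Set.indicator_of_notMem hx]

/-- A finite Morse index solution of `−u″ + W u = ρ |u|^{p−2} u` on `ℝ`
is stable outside a compact set. -/
theorem stmt_14 (p : ℝ) (hp : 2 < p) (W ρ : ℝ → ℝ)
    (hWmeas : Measurable W) (hρmeas : Measurable ρ)
    (hbdd : ∃ C : ℝ, ∀ᵐ x ∂(volume : Measure ℝ), W x ≤ C ∧ ρ x ≤ C)
    (hW : ∀ᵐ x ∂(volume : Measure ℝ), 0 ≤ W x)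
    (hρ : ∀ᵐ x ∂(volume : Measure ℝ), 0 ≤ ρ x)
    (u u' u'' : ℝ → ℝ)
    (hu : ∀ x, HasDerivAt u (u' x) x)
    (hu'cont : Continuous u') (hu'lip : LocallyLipschitz u')
    (hu'' : ∀ᵐ x ∂(volume : Measure ℝ), HasDerivAt u' (u'' x) x)
    (heq : ∀ᵐ x ∂(volume : Measure ℝ),
      -u'' x + W x * u x = ρ x * (|u x| ^ (p - 2) * u x))
    (hfin : ∃ m : ℕ, ¬ MorseIndexGE p W ρ u (m + 1)) :
    ∃ R : ℝ, 0 < R ∧ ∀ φ : ℝ → ℝ, IsTestFun φ →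
      Function.support φ ⊆ (Set.Icc (-R) R)ᶜ → 0 ≤ quadForm p W ρ u φ := by
  classical
  by_contra hcon
  push_neg at hcon
  obtain ⟨m, hm⟩ := hfin
  apply hm
  obtain ⟨C, hC⟩ := hbdd
  have hucont : Continuous u := by
    rw [continuous_iff_continuousAt]
    exact fun x => (hu x).continuousAt
  -- Step 1: for each positive radius produce a test function with negative
  -- quadratic form supported outside, together with a bound on its support.
  have H2 : ∀ R : ℝ, 0 < R → ∃ q : (ℝ → ℝ) × ℝ,
      IsTestFun q.1 ∧ (Function.support q.1 ⊆ {x | R < |x|}) ∧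
      quadForm p W ρ u q.1 < 0 ∧ R < q.2 ∧
      tsupport q.1 ⊆ {x | |x| ≤ q.2 - 1} := by
    intro R hR
    obtain ⟨φ, h1, h2, h3⟩ := hcon R hR
    have hsupp : Function.support φ ⊆ {x | R < |x|} := by
      intro x hx
      have hx2 := h2 hx
      simp only [Set.mem_compl_iff, Set.mem_Icc, not_and_or, not_le] at hx2
      simp only [Set.mem_setOf_eq]
      rcases hx2 with h | h
      · rw [abs_of_neg (by linarith)]; linarith
      · exact lt_of_lt_of_le h (le_abs_self x)
    obtain ⟨S0, hS0⟩ := h1.2.isCompact.isBounded.subset_closedBall 0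
    refine ⟨(φ, max S0 R + 2), h1, hsupp, h3, ?_, ?_⟩
    · simp only
      have := le_max_right S0 R
      linarith
    · intro x hx
      have h4 := hS0 hx
      simp only [Metric.mem_closedBall, Real.dist_eq, sub_zero] at h4
      simp only [Set.mem_setOf_eq]
      have := le_max_left S0 R
      linarith
  -- Step 2: recursively construct radii and test functions.
  set next : ℝ → (ℝ → ℝ) × ℝ :=
    fun R => if hR : 0 < R then (H2 R hR).choose else (0, 1) with hnext
  set r : ℕ → ℝ := fun n => Nat.rec 1 (fun _ prev => (next prev).2) n with hr
  have hr0 : r 0 = 1 := rfl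
  have hrsucc : ∀ n, r (n + 1) = (next (r n)).2 := fun n => rfl
  have hrpos : ∀ n, 0 < r n := by
    intro n
    induction n with
    | zero => norm_num [hr0]
    | succ k ih =>
      rw [hrsucc]
      have hnq : next (r k) = (H2 (r k) ih).choose := by
        simp only [hnext, dif_pos ih]
      rw [hnq]
      have := (H2 (r k) ih).choose_spec.2.2.2.1
      linarith
  set Φ : ℕ → ℝ → ℝ := fun n => (next (r n)).1 with hΦ
  have hspec : ∀ n, IsTestFun (Φ n) ∧
      Function.support (Φ n) ⊆ {x | r n < |x|} ∧
      quadForm p W ρ u (Φ n) < 0 ∧ r n < r (n + 1) ∧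
      tsupport (Φ n) ⊆ {x | |x| ≤ r (n + 1) - 1} := by
    intro n
    have h := hrpos n
    have hnq : next (r n) = (H2 (r n) h).choose := by
      simp only [hnext, dif_pos h]
    have hs := (H2 (r n) h).choose_spec
    rw [← hnq] at hs
    refine ⟨hs.1, hs.2.1, hs.2.2.1, ?_, ?_⟩
    · rw [hrsucc]; exact hs.2.2.2.1
    · rw [hrsucc]; exact hs.2.2.2.2
  have hmono : StrictMono r := strictMono_nat_of_lt_succ fun n => (hspec n).2.2.2.1
  have htsub : ∀ n, tsupport (Φ n) ⊆ {x | r n ≤ |x|} := by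
    intro n
    refine closure_minimal (fun x hx => ?_) (isClosed_le continuous_const continuous_abs)
    have h := (hspec n).2.1 hx
    simp only [Set.mem_setOf_eq] at h ⊢
    linarith
  have hdisj : ∀ i j : ℕ, i < j → ∀ x, x ∈ tsupport (Φ i) → x ∉ tsupport (Φ j) := by
    intro i j hij x hxi hxj
    have h1 : |x| ≤ r (i + 1) - 1 := (hspec i).2.2.2.2 hxi
    have h2 : r j ≤ |x| := htsub j hxj
    have h3 : r (i + 1) ≤ r j := hmono.monotone (Nat.succ_le_of_lt hij)
    linarith
  have hnot : ∀ i j : ℕ, i ≠ j → ∀ x, x ∈ tsupport (Φ i) → x ∉ tsupport (Φ j) := by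
    intro i j hij x hxi hxj
    rcases hij.lt_or_gt with h | h
    · exact hdisj i j h x hxi hxj
    · exact hdisj j i h x hxj hxi
  have hne : ∀ n, Φ n ≠ 0 := by
    intro n h0
    have hq := (hspec n).2.2.1
    rw [h0] at hq
    have hz : quadForm p W ρ u 0 = 0 := by
      have hd : ∀ x : ℝ, deriv (0 : ℝ → ℝ) x = 0 := fun x => deriv_const x 0
      simp [quadForm, hd]
    rw [hz] at hq
    exact lt_irrefl 0 hq
  -- Step 3: assemble the Morse index witness.
  refine ⟨fun i : Fin (m + 1) => Φ i, fun i => (hspec i).1, ?_, ?_⟩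
  · rw [Fintype.linearIndependent_iff]
    intro c hc i
    obtain ⟨x, hx⟩ : ∃ x, Φ i x ≠ 0 := by
      by_contra hall
      push_neg at hall
      exact hne i (funext hall)
    have hxi : x ∈ tsupport (Φ (i : ℕ)) := subset_tsupport _ hx
    have hsum := congrFun hc x
    simp only [Finset.sum_apply, Pi.smul_apply, smul_eq_mul, Pi.zero_apply] at hsum
    have hone : ∑ j : Fin (m + 1), c j * Φ j x = c i * Φ i x := by
      refine Finset.sum_eq_single i (fun j _ hj => ?_) (by simp)
      have : Φ (j : ℕ) x = 0 := by
        by_contra hjx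
        exact hnot i j (fun h => hj (Fin.val_injective h).symm) x hxi (subset_tsupport _ hjx)
      rw [this, mul_zero]
    rw [hone] at hsum
    exact (mul_eq_zero.mp hsum).resolve_right hx
  · intro c hcne
    set ψ : ℝ → ℝ := ∑ i : Fin (m + 1), c i • (fun i : Fin (m + 1) => Φ i) i with hψ
    have hψval : ∀ y, ψ y = ∑ i : Fin (m + 1), c i * Φ i y := by
      intro y
      simp [hψ, Finset.sum_apply]
    set F : (ℝ → ℝ) → ℝ → ℝ := fun f x => (deriv f x) ^ 2 + W x * (f x) ^ 2
      - (p - 1) * ρ x * |u x| ^ (p - 2) * (f x) ^ 2 with hF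
    have hquad : ∀ f, quadForm p W ρ u f = ∫ x : ℝ, F f x := fun f => rfl
    -- pointwise identity
    have hpt : ∀ x, F ψ x = ∑ i : Fin (m + 1), (c i) ^ 2 * F (Φ i) x := by
      intro x
      by_cases hex : ∃ i : Fin (m + 1), x ∈ tsupport (Φ i)
      · obtain ⟨i, hi⟩ := hex
        have hzero : ∀ j : Fin (m + 1), j ≠ i → x ∉ tsupport (Φ j) := fun j hj =>
          hnot i j (fun h => hj (Fin.val_injective h.symm)) x hi
        have hall : ∀ᶠ y in nhds x, ∀ j : Fin (m + 1), j ≠ i → Φ j y = 0 := by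
          rw [eventually_all]
          intro j
          by_cases hj : j = i
          · exact Filter.Eventually.of_forall fun y h => absurd hj h
          · have hev := notMem_tsupport_iff_eventuallyEq.mp (hzero j hj)
            filter_upwards [hev] with y hy _
            simpa using hy
        have hev : ψ =ᶠ[nhds x] fun y => c i * Φ i y := by
          filter_upwards [hall] with y hy
          rw [hψval]
          exact Finset.sum_eq_single i (fun j _ hj => by rw [hy j hj, mul_zero]) (by simp)
        have hdψ : deriv ψ x = c i * deriv (Φ i) x := by
          rw [hev.deriv_eq]
          exact deriv_const_mul_field (c i)
        have hψx : ψ x = c i * Φ i x := hev.self_of_nhds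
        have hrhs : ∑ j : Fin (m + 1), (c j) ^ 2 * F (Φ j) x
            = (c i) ^ 2 * F (Φ i) x := by
          refine Finset.sum_eq_single i (fun j _ hj => ?_) (by simp)
          have h0 : Φ (j : ℕ) x = 0 := image_eq_zero_of_notMem_tsupport (hzero j hj)
          have hd0 : deriv (Φ (j : ℕ)) x = 0 := by
            have h := notMem_tsupport_iff_eventuallyEq.mp (hzero j hj)
            rw [h.deriv_eq]
            exact deriv_const x 0
          simp only [hF, h0, hd0]
          ring
        rw [hrhs]
        simp only [hF, hdψ, hψx]
        ring
      · push_neg at hex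
        have h0 : ∀ j : Fin (m + 1), Φ j x = 0 := fun j =>
          image_eq_zero_of_notMem_tsupport (hex j)
        have hd0 : ∀ j : Fin (m + 1), deriv (Φ (j : ℕ)) x = 0 := by
          intro j
          have h := notMem_tsupport_iff_eventuallyEq.mp (hex j)
          rw [h.deriv_eq]
          exact deriv_const x 0
        have hall : ∀ᶠ y in nhds x, ∀ j : Fin (m + 1), Φ j y = 0 := by
          rw [eventually_all]
          intro j
          have hev := notMem_tsupport_iff_eventuallyEq.mp (hex j)
          filter_upwards [hev] with y hy
          simpa using hy
        have hev : ψ =ᶠ[nhds x] fun _ => (0 : ℝ) := by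
          filter_upwards [hall] with y hy
          rw [hψval]
          simp [hy]
        have hdψ : deriv ψ x = 0 := by
          rw [hev.deriv_eq]
          exact deriv_const x 0
        have hψx : ψ x = 0 := hev.self_of_nhds
        simp [hF, hdψ, hψx, h0, hd0]
    -- integrability
    have hInt : ∀ j : Fin (m + 1), Integrable (F (Φ j)) (volume : Measure ℝ) := by
      intro j
      exact aux_integrable p hp C W ρ u (Φ j) hWmeas hρmeas hC hW hρ hucont (hspec j).1
    have hsplit : quadForm p W ρ u ψ
        = ∑ i : Fin (m + 1), (c i) ^ 2 * quadForm p W ρ u (Φ i) := by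
      rw [hquad]
      calc (∫ x : ℝ, F ψ x)
          = ∫ x : ℝ, ∑ i : Fin (m + 1), (c i) ^ 2 * F (Φ i) x := by
            exact integral_congr_ae (Filter.Eventually.of_forall hpt)
        _ = ∑ i : Fin (m + 1), ∫ x : ℝ, (c i) ^ 2 * F (Φ i) x :=
            integral_finset_sum _ (fun i _ => (hInt i).const_mul _)
        _ = ∑ i : Fin (m + 1), (c i) ^ 2 * quadForm p W ρ u (Φ i) := by
            refine Finset.sum_congr rfl fun i _ => ?_
            rw [integral_const_mul, hquad]
    obtain ⟨i, hci⟩ : ∃ i : Fin (m + 1), c i ≠ 0 := by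
      by_contra hall
      push_neg at hall
      apply hcne
      have : (∑ i : Fin (m + 1), c i • (fun i : Fin (m + 1) => Φ i) i) = 0 := by
        refine Finset.sum_eq_zero fun i _ => ?_
        rw [hall i, zero_smul]
      exact this
    have hlt : ∑ i : Fin (m + 1), (c i) ^ 2 * quadForm p W ρ u (Φ i)
        < ∑ _i : Fin (m + 1), (0 : ℝ) := by
      refine Finset.sum_lt_sum (fun j _ => ?_) ⟨i, Finset.mem_univ i, ?_⟩
      · exact mul_nonpos_iff.mpr (Or.inl ⟨sq_nonneg _, le_of_lt ((hspec j).2.2.1)⟩)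
      · exact mul_neg_of_pos_of_neg (by positivity) ((hspec i).2.2.1)
    rw [hsplit]
    simpa using hlt
end
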